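/- arXiv:0907.5596 — 2 statements merged into one kernel-verified Lean document; each statement's English description precedes it below -/
import Mathlib

section
/- Fix 0 < y ≤ 2. For all x with 0 < x ≤ (π/2)², the function Ψ(x,y) = (1/√x)·arcsin((y/2)·sin(√x)) satisfies Ψ(x,y) ≥ Ψ((π/2)², y) = (2/π)·arcsin(y/2). -/
open Real

lemma psi_key (a : ℝ) (ha0 : 0 < a) (ha1 : a ≤ 1) (t : ℝ) (ht0 : 0 < t) (ht : t ≤ π / 2) :
    2 / π * Real.arcsin a * t ≤ Real.arcsin (a * Real.sin t) := by
  have hπ2 : (0:ℝ) < π / 2 := by positivity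
  have hconc : ConcaveOn ℝ (Set.Icc 0 (π / 2)) (fun t => Real.arcsin (a * Real.sin t)) := by
    apply concaveOn_of_hasDerivWithinAt2_nonpos (convex_Icc _ _)
      (f' := fun t => 1 / Real.sqrt (1 - (a * Real.sin t) ^ 2) * (a * Real.cos t))
      (f'' := fun t => a * Real.sin t * (a ^ 2 - 1) /
        ((1 - (a * Real.sin t) ^ 2) * Real.sqrt (1 - (a * Real.sin t) ^ 2)))
    · exact (Real.continuous_arcsin.comp (continuous_const.mul Real.continuous_sin)).continuousOn
    · intro x hx
      rw [interior_Icc] at hx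
      have hs0 : 0 < Real.sin x := Real.sin_pos_of_pos_of_lt_pi hx.1 (hx.2.trans (by linarith [Real.pi_pos]))
      have hs1 : Real.sin x < 1 := by
        have := Real.strictMonoOn_sin (by constructor <;> nlinarith [Real.pi_pos, hx.1, hx.2])
          (by constructor <;> nlinarith [Real.pi_pos]) hx.2
        simpa using this
      have has1 : a * Real.sin x < 1 := by nlinarith
      have has0 : 0 < a * Real.sin x := mul_pos ha0 hs0
      have hg : HasDerivAt (fun t => a * Real.sin t) (a * Real.cos x) x :=
        (Real.hasDerivAt_sin x).const_mul a
      have h1 : HasDerivAt (fun t => Real.arcsin (a * Real.sin t))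
          (1 / Real.sqrt (1 - (a * Real.sin x) ^ 2) * (a * Real.cos x)) x :=
        by have := (Real.hasDerivAt_arcsin (x := a * Real.sin x) (by linarith) (ne_of_lt has1)).comp x hg; exact this
      exact h1.hasDerivWithinAt
    · intro x hx
      rw [interior_Icc] at hx
      have hs0 : 0 < Real.sin x := Real.sin_pos_of_pos_of_lt_pi hx.1 (hx.2.trans (by linarith [Real.pi_pos]))
      have hs1 : Real.sin x < 1 := by
        have := Real.strictMonoOn_sin (by constructor <;> nlinarith [Real.pi_pos, hx.1, hx.2])
          (by constructor <;> nlinarith [Real.pi_pos]) hx.2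
        simpa using this
      have has1 : a * Real.sin x < 1 := by nlinarith
      have has0 : 0 < a * Real.sin x := mul_pos ha0 hs0
      have hu0 : 0 < 1 - (a * Real.sin x) ^ 2 := by nlinarith
      have hr0 : 0 < Real.sqrt (1 - (a * Real.sin x) ^ 2) := Real.sqrt_pos.2 hu0
      have hr2 : Real.sqrt (1 - (a * Real.sin x) ^ 2) ^ 2 = 1 - (a * Real.sin x) ^ 2 :=
        Real.sq_sqrt hu0.le
      have hg : HasDerivAt (fun t => a * Real.sin t) (a * Real.cos x) x :=
        (Real.hasDerivAt_sin x).const_mul a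
      have hu : HasDerivAt (fun t => 1 - (a * Real.sin t) ^ 2)
          (-(2 * (a * Real.sin x) ^ 1 * (a * Real.cos x))) x := (hg.pow 2).const_sub 1
      have hsq : HasDerivAt (fun t => Real.sqrt (1 - (a * Real.sin t) ^ 2))
          (1 / (2 * Real.sqrt (1 - (a * Real.sin x) ^ 2)) *
            -(2 * (a * Real.sin x) ^ 1 * (a * Real.cos x))) x :=
        (Real.hasDerivAt_sqrt (ne_of_gt hu0)).comp x hu
      have hcos : HasDerivAt (fun t => a * Real.cos t) (a * -Real.sin x) x :=
        (Real.hasDerivAt_cos x).const_mul a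
      have hmain := ((hasDerivAt_const x (1:ℝ)).div hsq (ne_of_gt hr0)).mul hcos
      have heq : (0 * Real.sqrt (1 - (a * Real.sin x) ^ 2) -
            1 * (1 / (2 * Real.sqrt (1 - (a * Real.sin x) ^ 2)) *
              -(2 * (a * Real.sin x) ^ 1 * (a * Real.cos x)))) /
            Real.sqrt (1 - (a * Real.sin x) ^ 2) ^ 2 * (a * Real.cos x) +
          1 / Real.sqrt (1 - (a * Real.sin x) ^ 2) * (a * -Real.sin x) =
          a * Real.sin x * (a ^ 2 - 1) /
            ((1 - (a * Real.sin x) ^ 2) * Real.sqrt (1 - (a * Real.sin x) ^ 2)) := by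
        have hpy : Real.sin x ^ 2 + Real.cos x ^ 2 = 1 := Real.sin_sq_add_cos_sq x
        have hc2 : Real.cos x ^ 2 = 1 - Real.sin x ^ 2 := by linarith
        have hu1 : 1 - a ^ 2 * Real.sin x ^ 2 ≠ 0 := by nlinarith
        rw [hr2]
        field_simp [hu1, hr0.ne']
        ring_nf
        rw [hc2]
        ring
      rw [show (((fun x => (1:ℝ)) / fun t => √(1 - (a * sin t) ^ 2) : ℝ → ℝ)) x = 1 / √(1 - (a * sin x) ^ 2) from rfl, heq] at hmain
      exact hmain.hasDerivWithinAt
    · intro x hx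
      rw [interior_Icc] at hx
      have hs0 : 0 < Real.sin x := Real.sin_pos_of_pos_of_lt_pi hx.1 (hx.2.trans (by linarith [Real.pi_pos]))
      have hs1 : Real.sin x < 1 := by
        have := Real.strictMonoOn_sin (by constructor <;> nlinarith [Real.pi_pos, hx.1, hx.2])
          (by constructor <;> nlinarith [Real.pi_pos]) hx.2
        simpa using this
      have has1 : a * Real.sin x < 1 := by nlinarith
      have hu0 : 0 < 1 - (a * Real.sin x) ^ 2 := by nlinarith [mul_pos ha0 hs0]
      apply div_nonpos_of_nonpos_of_nonneg
      · exact mul_nonpos_of_nonneg_of_nonpos (mul_pos ha0 hs0).le (by nlinarith)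
      · positivity
  have h0m : (0:ℝ) ∈ Set.Icc 0 (π / 2) := ⟨le_refl 0, hπ2.le⟩
  have hTm : π / 2 ∈ Set.Icc 0 (π / 2) := ⟨hπ2.le, le_refl _⟩
  set l : ℝ := t / (π / 2) with hl
  have hl0 : 0 ≤ l := by positivity
  have hl1 : l ≤ 1 := by rw [hl, div_le_one hπ2]; exact ht
  have := hconc.2 h0m hTm (by linarith : (0:ℝ) ≤ 1 - l) hl0 (by ring)
  simp only [smul_eq_mul, mul_zero, Real.sin_zero, Real.arcsin_zero, mul_one, zero_add] at this
  have hlt : l * (π / 2) = t := by rw [hl]; field_simp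
  rw [hlt] at this
  rw [Real.sin_pi_div_two, mul_one] at this
  have : l * Real.arcsin a = 2 / π * Real.arcsin a * t := by
    rw [hl]; field_simp
  linarith [hconc.2 h0m hTm (by linarith : (0:ℝ) ≤ 1 - l) hl0 (by ring : (1 - l) + l = 1), this]

theorem Psi_lower_bound (y : ℝ) (hy0 : 0 < y) (hy2 : y ≤ 2)
    (x : ℝ) (hx0 : 0 < x) (hx : x ≤ (π / 2) ^ 2) :
    (1 / Real.sqrt x) * Real.arcsin ((y / 2) * Real.sin (Real.sqrt x)) ≥
      (2 / π) * Real.arcsin (y / 2) ∧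
    (1 / Real.sqrt ((π / 2) ^ 2)) * Real.arcsin ((y / 2) * Real.sin (Real.sqrt ((π / 2) ^ 2))) =
      (2 / π) * Real.arcsin (y / 2) := by
  have hπ2 : (0:ℝ) < π / 2 := by positivity
  have hsq : Real.sqrt ((π / 2) ^ 2) = π / 2 := Real.sqrt_sq hπ2.le
  constructor
  · have ht0 : 0 < Real.sqrt x := Real.sqrt_pos.2 hx0
    have ht : Real.sqrt x ≤ π / 2 := by
      calc Real.sqrt x ≤ Real.sqrt ((π / 2) ^ 2) := Real.sqrt_le_sqrt hx
        _ = π / 2 := hsq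
    have hkey := psi_key (y / 2) (by linarith) (by linarith) (Real.sqrt x) ht0 ht
    have hrw : (1 / Real.sqrt x) * Real.arcsin ((y / 2) * Real.sin (Real.sqrt x)) =
        Real.arcsin ((y / 2) * Real.sin (Real.sqrt x)) / Real.sqrt x := by ring
    rw [ge_iff_le, hrw, le_div_iff₀ ht0]
    linarith
  · rw [hsq, Real.sin_pi_div_two, mul_one]
    have : π ≠ 0 := Real.pi_ne_zero
    field_simp
end

section
/- Let 1/2 < α < 1 and let k1, k2 > 0 with k1 + k2 = 1. Then (1 − k1^(2α) − k2^(2α)) / (2 k1^α k2^α) ≤ 2^(2α−1) − 1, so the comparison angle satisfies arccos of the left side ≥ arccos(2^(2α−1) − 1). -/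
open Real

lemma keyB {p t : ℝ} (hp1 : 1 < p) (hp2 : p < 2) (ht0 : 0 < t) (ht1 : t ≤ 1) :
    (1 - t) * (1 + t) ^ (p - 1) ≤ 1 - t ^ p := by
  set q := p - 1 with hq
  have hq0 : 0 ≤ q := by linarith
  have hq1 : q ≤ 1 := by linarith
  have hBern1 : (1 + t) ^ q ≤ 1 + q * t :=
    rpow_one_add_le_one_add_mul_self (by linarith) hq0 hq1
  have hBern2 : t ^ q ≤ 1 + q * (t - 1) := by
    have := rpow_one_add_le_one_add_mul_self (s := t - 1) (by linarith) hq0 hq1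
    simpa using this
  have htp : t ^ p = t * t ^ q := by
    rw [hq, ← Real.rpow_one_add' (le_of_lt ht0) (by intro h; linarith)]
    ring_nf
  have h1 : (1 - t) * (1 + t) ^ q ≤ (1 - t) * (1 + q * t) :=
    mul_le_mul_of_nonneg_left hBern1 (by linarith)
  have h2 : t * t ^ q ≤ t * (1 + q * (t - 1)) :=
    mul_le_mul_of_nonneg_left hBern2 (le_of_lt ht0)
  rw [htp]
  nlinarith [h1, h2]

noncomputable def phiF (p : ℝ) : ℝ → ℝ := fun t => ((1+t)^p - 1 - t^p) * t^(-(p/2))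

lemma phi_hasDerivAt {p x : ℝ} (hx : 0 < x) :
    HasDerivAt (phiF p)
      ((p*(1+x)^(p-1) - p*x^(p-1)) * x^(-(p/2))
        + ((1+x)^p - 1 - x^p) * (-(p/2) * x^(-(p/2)-1))) x := by
  have h2 : HasDerivAt (fun t : ℝ => t^p) (p * x^(p-1)) x :=
    Real.hasDerivAt_rpow_const (Or.inl (ne_of_gt hx))
  have h3 : HasDerivAt (fun t : ℝ => t^(-(p/2))) (-(p/2) * x^(-(p/2)-1)) x :=
    Real.hasDerivAt_rpow_const (Or.inl (ne_of_gt hx))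
  have h1 : HasDerivAt (fun t : ℝ => (1+t)^p) (1 * p * (1+x)^(p-1)) x :=
    ((hasDerivAt_id x).const_add 1).rpow_const (Or.inl (by positivity))
  have hg : HasDerivAt (fun t : ℝ => (1+t)^p - 1 - t^p) (p*(1+x)^(p-1) - p*x^(p-1)) x := by
    have := (h1.sub_const 1).sub h2
    exact this.congr_deriv (by ring)
  exact hg.mul h3

lemma phi_deriv_nonneg {p x : ℝ} (hp1 : 1 < p) (hp2 : p < 2) (hx0 : 0 < x) (hx1 : x ≤ 1) :
    0 ≤ (p*(1+x)^(p-1) - p*x^(p-1)) * x^(-(p/2))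
        + ((1+x)^p - 1 - x^p) * (-(p/2) * x^(-(p/2)-1)) := by
  set A := (1+x)^(p-1) with hA
  set X := x^(p-1) with hX
  have hxne : x ≠ 0 := ne_of_gt hx0
  have hsplit : x^(-(p/2)-1) = x^(-(p/2)) * x⁻¹ := by
    rw [← Real.rpow_neg_one x, ← Real.rpow_add hx0]; ring_nf
  have hP : (1+x)^p = (1+x) * A := by
    rw [hA, ← Real.rpow_one_add' (by positivity) (by intro h; linarith)]; ring_nf
  have hXp : x^p = x * X := by
    rw [hX, ← Real.rpow_one_add' (le_of_lt hx0) (by intro h; linarith)]; ring_nf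
  have hkey : (1 - x) * A ≤ 1 - x ^ p := keyB hp1 hp2 hx0 hx1
  have hM : (0:ℝ) < x^(-(p/2)) := Real.rpow_pos_of_pos hx0 _
  rw [hsplit, hP, hXp]
  have hgoal : 0 ≤ (p*A - p*X) + ((1+x)*A - 1 - x*X) * (-(p/2) * x⁻¹) := by
    rw [← sub_nonneg] at hkey
    have h2 : 0 ≤ (p/(2*x)) * ((1 - x*X) - (1-x)*A) := by
      apply mul_nonneg (by positivity)
      rw [hXp] at hkey; linarith
    have hxinv : x⁻¹ = 1/x := by field_simp
    calc (0:ℝ) ≤ (p/(2*x)) * ((1 - x*X) - (1-x)*A) := h2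
      _ = (p*A - p*X) + ((1+x)*A - 1 - x*X) * (-(p/2) * x⁻¹) := by
          field_simp; ring
  calc (0:ℝ) ≤ ((p*A - p*X) + ((1+x)*A - 1 - x*X) * (-(p/2) * x⁻¹)) * x^(-(p/2)) :=
        mul_nonneg hgoal (le_of_lt hM)
    _ = (p*A - p*X) * x^(-(p/2)) + ((1+x)*A - 1 - x*X) * (-(p/2) * (x^(-(p/2)) * x⁻¹)) := by ring

lemma lemA {p t : ℝ} (hp1 : 1 < p) (hp2 : p < 2) (ht0 : 0 < t) (ht1 : t ≤ 1) :
    (1+t)^p ≤ 1 + t^p + ((2:ℝ)^p - 2) * t^(p/2) := by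
  have hmono : phiF p t ≤ phiF p 1 := by
    rcases eq_or_lt_of_le ht1 with rfl | hlt
    · exact le_rfl
    · have hD : Convex ℝ (Set.Icc t 1) := convex_Icc t 1
      have hint : interior (Set.Icc t 1) = Set.Ioo t 1 := interior_Icc
      have hdiff : ∀ x ∈ Set.Icc t 1, HasDerivAt (phiF p)
          ((p*(1+x)^(p-1) - p*x^(p-1)) * x^(-(p/2))
            + ((1+x)^p - 1 - x^p) * (-(p/2) * x^(-(p/2)-1))) x := by
        intro x hx; exact phi_hasDerivAt (lt_of_lt_of_le ht0 hx.1)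
      have hcont : ContinuousOn (phiF p) (Set.Icc t 1) :=
        fun x hx => ((hdiff x hx).differentiableAt).continuousAt.continuousWithinAt
      have hdiff' : DifferentiableOn ℝ (phiF p) (interior (Set.Icc t 1)) := by
        rw [hint]; intro x hx
        exact ((hdiff x (Set.mem_Icc_of_Ioo hx)).differentiableAt).differentiableWithinAt
      have hder : ∀ x ∈ interior (Set.Icc t 1), 0 ≤ deriv (phiF p) x := by
        rw [hint]; intro x hx
        rw [(phi_hasDerivAt (lt_trans ht0 hx.1)).deriv]
        exact phi_deriv_nonneg hp1 hp2 (lt_trans ht0 hx.1) (le_of_lt hx.2)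
      exact monotoneOn_of_deriv_nonneg hD hcont hdiff' hder
        (Set.mem_Icc.2 ⟨le_refl t, ht1⟩) (Set.mem_Icc.2 ⟨ht1, le_refl 1⟩) ht1
  have hphi1 : phiF p 1 = (2:ℝ)^p - 2 := by
    simp [phiF]
    ring_nf
  rw [hphi1] at hmono
  have hpos : (0:ℝ) < t^(p/2) := Real.rpow_pos_of_pos ht0 _
  have hmul := mul_le_mul_of_nonneg_right hmono (le_of_lt hpos)
  have hid : ((1+t)^p - 1 - t^p) * t^(-(p/2)) * t^(p/2) = (1+t)^p - 1 - t^p := by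
    rw [mul_assoc, ← Real.rpow_add ht0]
    norm_num
  rw [phiF] at hmul
  rw [hid] at hmul
  linarith

lemma lemC {p x y : ℝ} (hp1 : 1 < p) (hp2 : p < 2) (hx : 0 < x) (hy : 0 < y) (hxy : x ≤ y) :
    (x+y)^p ≤ x^p + y^p + ((2:ℝ)^p - 2) * (x*y)^(p/2) := by
  have ht0 : 0 < x/y := div_pos hx hy
  have ht1 : x/y ≤ 1 := (div_le_one hy).2 hxy
  have hA := lemA hp1 hp2 ht0 ht1
  have hyp : (0:ℝ) < y^p := Real.rpow_pos_of_pos hy _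
  have hmul := mul_le_mul_of_nonneg_right hA (le_of_lt hyp)
  have e1 : (1 + x/y)^p * y^p = (x+y)^p := by
    rw [← Real.mul_rpow (by positivity) (le_of_lt hy)]
    congr 1; field_simp; ring
  have e2 : (x/y)^p * y^p = x^p := by
    rw [← Real.mul_rpow (le_of_lt ht0) (le_of_lt hy)]
    congr 1; field_simp
  have e3 : (x/y)^(p/2) * y^p = (x*y)^(p/2) := by
    have hyp2 : y^p = (y*y)^(p/2) := by
      rw [Real.mul_rpow (le_of_lt hy) (le_of_lt hy), ← Real.rpow_add hy]
      ring_nf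
    rw [hyp2, ← Real.mul_rpow (le_of_lt ht0) (by positivity)]
    congr 1; field_simp
  rw [e1] at hmul
  calc (x+y)^p ≤ (1 + (x/y)^p + ((2:ℝ)^p - 2) * (x/y)^(p/2)) * y^p := hmul
    _ = (x/y)^p * y^p + y^p + ((2:ℝ)^p - 2) * ((x/y)^(p/2) * y^p) := by ring
    _ = x^p + y^p + ((2:ℝ)^p - 2) * (x*y)^(p/2) := by rw [e2, e3]

theorem comparison_angle_bound_of_alpha_gt_half (α k1 k2 : ℝ) (hα0 : 1/2 < α) (hα : α < 1)
    (hk1 : 0 < k1) (hk2 : 0 < k2) (hsum : k1 + k2 = 1) :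
    (1 - k1 ^ (2 * α) - k2 ^ (2 * α)) / (2 * k1 ^ α * k2 ^ α) ≤ (2:ℝ) ^ (2 * α - 1) - 1 ∧
    Real.arccos ((1 - k1 ^ (2 * α) - k2 ^ (2 * α)) / (2 * k1 ^ α * k2 ^ α)) ≥
      Real.arccos ((2:ℝ) ^ (2 * α - 1) - 1) := by
  set p := 2 * α with hp
  have hp1 : 1 < p := by rw [hp]; linarith
  have hp2 : p < 2 := by rw [hp]; linarith
  -- main inequality
  have hmain : (1:ℝ) ≤ k1^p + k2^p + ((2:ℝ)^p - 2) * (k1*k2)^(p/2) := by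
    rcases le_total k1 k2 with h | h
    · have := lemC hp1 hp2 hk1 hk2 h
      rwa [hsum, Real.one_rpow] at this
    · have := lemC hp1 hp2 hk2 hk1 h
      rw [show k2 + k1 = 1 by linarith, Real.one_rpow, mul_comm k2 k1] at this
      linarith
  have hhalf : p / 2 = α := by rw [hp]; ring
  rw [hhalf] at hmain
  have hprod : (k1*k2)^α = k1^α * k2^α := Real.mul_rpow (le_of_lt hk1) (le_of_lt hk2)
  have hD : (0:ℝ) < 2 * k1^α * k2^α := by
    have := Real.rpow_pos_of_pos hk1 α
    have := Real.rpow_pos_of_pos hk2 α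
    positivity
  have h2p : (2:ℝ)^(2*α - 1) = (2:ℝ)^p / 2 := by
    rw [hp, Real.rpow_sub (by norm_num), Real.rpow_one]
  have hfirst : (1 - k1 ^ (2 * α) - k2 ^ (2 * α)) / (2 * k1 ^ α * k2 ^ α) ≤
      (2:ℝ) ^ (2 * α - 1) - 1 := by
    rw [div_le_iff₀ hD, h2p]
    have : ((2:ℝ)^p - 2) * (k1*k2)^α = ((2:ℝ)^p/2 - 1) * (2 * k1^α * k2^α) := by
      rw [hprod]; ring
    rw [← hp]
    nlinarith [hmain, this]
  refine ⟨hfirst, ?_⟩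
  have : Real.arccos ((2:ℝ) ^ (2 * α - 1) - 1) ≤
      Real.arccos ((1 - k1 ^ (2 * α) - k2 ^ (2 * α)) / (2 * k1 ^ α * k2 ^ α)) := by
    unfold Real.arccos
    have := Real.monotone_arcsin hfirst
    linarith
  exact this
end
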